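/- Let x, y, n be positive integers with gcd(x, y) = 1 and let N = x^n + y^n with N > 2. Then the element y·x^{-1} has order exactly 2n in the multiplicative group (ℤ/Nℤ)*. -/
import Mathlib


theorem orderOf_div_eq_two_mul (x y n : ℕ) (hx : 0 < x) (hy : 0 < y) (hn : 0 < n)
    (hcop : Nat.gcd x y = 1) (hN : 2 < x ^ n + y ^ n)
    (u : (ZMod (x ^ n + y ^ n))ˣ)
    (hu : (u : ZMod (x ^ n + y ^ n)) = (y : ZMod (x ^ n + y ^ n)) * (x : ZMod (x ^ n + y ^ n))⁻¹) :
    orderOf u = 2 * n := by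
  revert hu u hN
  set N := x ^ n + y ^ n with hNdef
  intro hN u hu
  haveI : NeZero N := ⟨by omega⟩
  haveI : Fact (1 < N) := ⟨by omega⟩
  haveI : Fact (2 < N) := ⟨hN⟩
  -- x is coprime to N
  have hxN : Nat.Coprime x N := by
    have h1 : Nat.Coprime x (y ^ n) := (Nat.coprime_iff_gcd_eq_one.mpr hcop).pow_right n
    have h2 : Nat.Coprime x (y ^ n + x ^ (n - 1) * x) :=
      (Nat.coprime_add_mul_right_right x (y ^ n) (x ^ (n - 1))).mpr h1
    have hxx : x ^ (n - 1) * x = x ^ n := by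
      rw [← pow_succ]
      congr 1
      omega
    rw [hxx, add_comm] at h2
    exact h2
  have hxu : IsUnit (x : ZMod N) := (ZMod.isUnit_iff_coprime x N).mpr hxN
  have hxpu : ∀ m : ℕ, IsUnit ((x : ZMod N) ^ m) := fun m => hxu.pow m
  -- in ZMod N, x^n + y^n = 0
  have hsum : (x : ZMod N) ^ n + (y : ZMod N) ^ n = 0 := by
    have h0 : ((N : ℕ) : ZMod N) = 0 := ZMod.natCast_self N
    rw [hNdef] at h0
    push_cast at h0
    exact h0
  have hyx : (y : ZMod N) ^ n = -((x : ZMod N) ^ n) := by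
    rw [eq_neg_iff_add_eq_zero, add_comm]; exact hsum
  -- key: for any m, if u^m = -1 then N ∣ x^m + y^m
  have hkey : ∀ m : ℕ, u ^ m = -1 → N ∣ x ^ m + y ^ m := by
    intro m hm
    have hval : ((u : ZMod N)) ^ m = -1 := by
      have := congrArg (Units.val) hm
      simpa using this
    rw [hu, mul_pow] at hval
    have h1 : (y : ZMod N) ^ m * ((x : ZMod N)⁻¹) ^ m * (x : ZMod N) ^ m
        = -1 * (x : ZMod N) ^ m := by rw [hval]
    rw [mul_assoc, ← mul_pow, ZMod.inv_mul_of_unit _ hxu, one_pow, mul_one] at h1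
    have h2 : ((x ^ m + y ^ m : ℕ) : ZMod N) = 0 := by
      push_cast
      rw [h1]; ring
    exact (ZMod.natCast_eq_zero_iff _ _).mp h2
  -- u^n = -1
  have hun : u ^ n = -1 := by
    apply Units.ext
    have hval : ((u : ZMod N)) ^ n * (x : ZMod N) ^ n = -1 * (x : ZMod N) ^ n := by
      rw [hu, mul_pow, mul_assoc, ← mul_pow, ZMod.inv_mul_of_unit _ hxu, one_pow,
        mul_one, hyx]
      ring
    have h2 : ((u : ZMod N)) ^ n = -1 := (hxpu n).mul_right_cancel hval
    simpa using h2
  have hne : (-1 : (ZMod N)ˣ) ≠ 1 := by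
    intro h
    have := congrArg (Units.val) h
    simp only [Units.val_neg, Units.val_one] at this
    exact ZMod.neg_one_ne_one this
  -- order computations
  set d := orderOf u with hd
  have hdn : ¬ d ∣ n := by
    intro h
    exact hne (hun.symm.trans (orderOf_dvd_iff_pow_eq_one.mp h))
  have hord2 : orderOf (u ^ n) = 2 := by
    rw [hun]
    exact orderOf_eq_prime (by simp) hne
  have hpow : orderOf (u ^ n) = d / Nat.gcd d n := orderOf_pow u
  set g := Nat.gcd d n with hg
  have hdpos : 0 < d := orderOf_pos u
  have hgpos : 0 < g := Nat.gcd_pos_of_pos_left n hdpos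
  have hgd : g ∣ d := Nat.gcd_dvd_left d n
  have hgn : g ∣ n := Nat.gcd_dvd_right d n
  have hdg : d = 2 * g := by
    have h2 : d / g = 2 := by rw [← hpow, hord2]
    obtain ⟨k, hk⟩ := hgd
    rw [hk, Nat.mul_div_cancel_left _ hgpos] at h2
    rw [h2] at hk
    omega
  -- n / g is odd
  obtain ⟨s, hs⟩ := hgn
  have hsodd : ¬ 2 ∣ s := by
    intro ⟨k, hk⟩
    apply hdn
    exact ⟨k, by rw [hdg, hs, hk]; ring⟩
  -- u^g = -1
  have hug : u ^ g = -1 := by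
    obtain ⟨k, hk⟩ : ∃ k, s = 2 * k + 1 := ⟨s / 2, by omega⟩
    have hsq : (u ^ g) ^ 2 = 1 := by
      rw [← pow_mul, show g * 2 = d by omega]
      exact pow_orderOf_eq_one u
    have : (u ^ g) ^ s = -1 := by rw [← pow_mul, ← hs, hun]
    rw [hk, pow_add, pow_mul, hsq, one_pow, one_mul, pow_one] at this
    exact this
  -- hence N ∣ x^g + y^g, forcing g = n
  have hdvd := hkey g hug
  have hgle : g ≤ n := Nat.le_of_dvd hn ⟨s, hs⟩
  have hgn' : g = n := by
    by_contra hlt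
    have hglt : g < n := lt_of_le_of_ne hgle hlt
    have hx2 : 2 ≤ x ∨ 2 ≤ y := by
      by_contra hc
      push_neg at hc
      have hx1 : x = 1 := by omega
      have hy1 : y = 1 := by omega
      rw [hNdef, hx1, hy1, one_pow] at hN
      omega
    have hsmall : x ^ g + y ^ g < N := by
      rw [hNdef]
      rcases hx2 with h2 | h2
      · have h3 : x ^ g < x ^ n := Nat.pow_lt_pow_right h2 hglt
        have h4 : y ^ g ≤ y ^ n := Nat.pow_le_pow_right hy hgle
        omega
      · have h3 : y ^ g < y ^ n := Nat.pow_lt_pow_right h2 hglt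
        have h4 : x ^ g ≤ x ^ n := Nat.pow_le_pow_right hx hgle
        omega
    have hpos : 0 < x ^ g + y ^ g := by positivity
    have := Nat.le_of_dvd hpos hdvd
    omega
  rw [hdg, hgn']
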